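/- Suppose every x with f(x) = 1 is contained in some coset from a family 𝒞 of cosets of F2^n, each of codimension exactly d, on each of which f ≡ 1, and no member of 𝒞 is contained in the union of the other members. Then |𝒞| ≤ (3n)^d · 2^d. (Counting incidences: Σ_{C∈𝒞} |C| = 2^{n−d}|𝒞|, and each point lies in at most (3n)^d members of 𝒞.) -/

import Mathlib

open Finset Module Submodule


/-- The coset `b + V` of `F2^n`. -/
def coset {n : ℕ} (b : Fin n → ZMod 2) (V : Submodule (ZMod 2) (Fin n → ZMod 2)) :
    Set (Fin n → ZMod 2) := {y | y - b ∈ V}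

namespace Stmt18Aux

variable {n : ℕ}

lemma zmod2_cases (a : ZMod 2) : a = 0 ∨ a = 1 := by revert a; decide

lemma zmod2_mul_self (a : ZMod 2) : a * a = a := by revert a; decide

/-- The multilinear monomial attached to a set of coordinates. -/
def mon (S : Finset (Fin n)) : (Fin n → ZMod 2) → ZMod 2 := fun x => ∏ i ∈ S, x i

/-- Span of monomials of degree at most `d`. -/
def spanM (n d : ℕ) : Submodule (ZMod 2) ((Fin n → ZMod 2) → ZMod 2) :=
  span (ZMod 2) (mon '' {S : Finset (Fin n) | S.card ≤ d})

lemma spanM_mono {d d' : ℕ} (h : d ≤ d') : spanM n d ≤ spanM n d' :=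
  span_mono (Set.image_mono fun S hS => le_trans hS h)

lemma proj_mul_mon (j : Fin n) (S : Finset (Fin n)) :
    (fun x => x j * mon S x) = mon (insert j S) := by
  funext x
  by_cases hj : j ∈ S
  · rw [Finset.insert_eq_self.mpr hj, mon, ← Finset.mul_prod_erase S _ hj, ← mul_assoc,
      zmod2_mul_self]
  · show _ = ∏ i ∈ insert j S, x i
    rw [Finset.prod_insert hj]; rfl


/-- Multiplying an element of the degree-`≤ d` span by an affine function lands in the
degree-`≤ d+1` span. -/
lemma mul_affine_mem {d : ℕ} (ℓ : (Fin n → ZMod 2) →ₗ[ZMod 2] ZMod 2) (c : ZMod 2)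
    {h : (Fin n → ZMod 2) → ZMod 2} (hh : h ∈ spanM n d) :
    (fun x => (ℓ x + c) * h x) ∈ spanM n (d + 1) := by
  induction hh using Submodule.span_induction with
  | mem g hg =>
    obtain ⟨S, hS, rfl⟩ := hg
    have hS' : S.card ≤ d := hS
    have key : (fun x => (ℓ x + c) * mon S x)
        = (∑ j : Fin n, ℓ (fun k => if j = k then 1 else 0) • mon (insert j S)) + c • mon S := by
      funext x
      have hx : ℓ x = ∑ j : Fin n, x j * ℓ (fun k => if j = k then 1 else 0) := by
        conv_lhs => rw [pi_eq_sum_univ x]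
        rw [map_sum]
        simp [smul_eq_mul]
      simp only [Pi.add_apply, Finset.sum_apply, Pi.smul_apply, smul_eq_mul]
      rw [add_mul, hx, Finset.sum_mul]
      congr 1
      apply Finset.sum_congr rfl
      intro j _
      rw [← proj_mul_mon j S]
      ring
    rw [key]
    refine add_mem (sum_mem fun j _ => smul_mem _ _ (subset_span ?_))
      (smul_mem _ _ (subset_span ?_))
    · exact ⟨insert j S, le_trans (Finset.card_insert_le _ _) (by omega), rfl⟩
    · exact ⟨S, Nat.le_succ_of_le hS', rfl⟩
  | zero =>
    have : (fun x => (ℓ x + c) * (0 : (Fin n → ZMod 2) → ZMod 2) x) = 0 := by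
      funext x; simp
    rw [this]; exact zero_mem _
  | add g g' _ _ hg hg' =>
    have : (fun x => (ℓ x + c) * (g + g') x)
        = (fun x => (ℓ x + c) * g x) + (fun x => (ℓ x + c) * g' x) := by
      funext x; simp [Pi.add_apply]; ring
    rw [this]; exact add_mem hg hg'
  | smul a g _ hg =>
    have : (fun x => (ℓ x + c) * (a • g) x) = a • (fun x => (ℓ x + c) * g x) := by
      funext x; simp [Pi.smul_apply, smul_eq_mul]; ring
    rw [this]; exact smul_mem _ _ hg

/-- A product of affine functions indexed by `s` lies in the span of monomials of
degree at most `s.card`. -/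
lemma prod_affine_mem {ι : Type*} [DecidableEq ι] (s : Finset ι)
    (φ : ι → ((Fin n → ZMod 2) →ₗ[ZMod 2] ZMod 2)) (c : ι → ZMod 2) :
    (fun x => ∏ i ∈ s, (φ i x + c i)) ∈ spanM n s.card := by
  induction s using Finset.cons_induction with
  | empty =>
    have : (fun x : Fin n → ZMod 2 => ∏ i ∈ (∅ : Finset ι), (φ i x + c i)) = mon ∅ := by
      funext x; simp [mon]
    rw [this]
    exact subset_span ⟨∅, by simp, rfl⟩
  | cons a s ha ih =>
    have : (fun x => ∏ i ∈ Finset.cons a s ha, (φ i x + c i))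
        = (fun x => (φ a x + c a) * ∏ i ∈ s, (φ i x + c i)) := by
      funext x; rw [Finset.prod_cons]
    rw [this, Finset.card_cons]
    exact mul_affine_mem (φ a) (c a) ih


/-- Indicator of a codimension-`d` coset as a degree-`≤ d` polynomial. -/
lemma coset_indicator {d : ℕ} (hd : d ≤ n) (b : Fin n → ZMod 2)
    (V : Submodule (ZMod 2) (Fin n → ZMod 2)) (hV : finrank (ZMod 2) V = n - d) :
    ∃ u ∈ spanM n d, ∀ x, (u x = 1 ↔ x ∈ coset b V) := by
  have hfull : finrank (ZMod 2) (Fin n → ZMod 2) = n := by simp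
  have hq : finrank (ZMod 2) ((Fin n → ZMod 2) ⧸ V) = d := by
    have h2 := Submodule.finrank_quotient_add_finrank V
    rw [hV, hfull] at h2; omega
  set Q := (Fin n → ZMod 2) ⧸ V with hQdef
  let B := Module.finBasis (ZMod 2) Q
  let φ : Fin (finrank (ZMod 2) Q) → ((Fin n → ZMod 2) →ₗ[ZMod 2] ZMod 2) :=
    fun i => (B.coord i).comp V.mkQ
  let c : Fin (finrank (ZMod 2) Q) → ZMod 2 := fun i => 1 - φ i b
  refine ⟨fun x => ∏ i, (φ i x + c i), ?_, ?_⟩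
  · have hm := prod_affine_mem (Finset.univ : Finset (Fin (finrank (ZMod 2) Q))) φ c
    rw [Finset.card_univ, Fintype.card_fin] at hm
    exact (congrArg (spanM n) hq) ▸ hm
  · intro x
    have hfac : ∀ i, φ i x + c i = 1 + φ i (x - b) := by
      intro i; simp only [c, map_sub]; ring
    constructor
    · intro hone'
      have hone : ∏ i, (φ i x + c i) = 1 := hone'
      have hall : ∀ i, (B.coord i) (V.mkQ (x - b)) = 0 := by
        intro i
        by_contra hne
        rcases zmod2_cases ((B.coord i) (V.mkQ (x - b))) with h0 | h1
        · exact hne h0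
        · have hz : φ i x + c i = 0 := by
            rw [hfac i]
            show 1 + (B.coord i) (V.mkQ (x - b)) = 0
            rw [h1]; decide
          rw [Finset.prod_eq_zero (Finset.mem_univ i) hz] at hone
          exact absurd hone (by decide)
      have hmk : V.mkQ (x - b) = 0 := (B.forall_coord_eq_zero_iff).mp hall
      exact (Submodule.Quotient.mk_eq_zero V).mp hmk
    · intro hx
      have hv : V.mkQ (x - b) = 0 := (Submodule.Quotient.mk_eq_zero V).mpr hx
      apply Finset.prod_eq_one
      intro i _
      rw [hfac i]
      show 1 + (B.coord i) (V.mkQ (x - b)) = 1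
      rw [hv]; simp

end Stmt18Aux

/-- if every `1`-input of `f` is covered by a family `𝒞` of cosets of
codimension exactly `d` on each of which `f ≡ 1`, and no member of `𝒞` is contained
in the union of the others, then `|𝒞| ≤ (3n)^d · 2^d`. -/
theorem stmt18 {n d : ℕ} (hd : d ≤ n) (f : (Fin n → ZMod 2) → ZMod 2)
    (𝒞 : Finset (Set (Fin n → ZMod 2)))
    (hcoset : ∀ C ∈ 𝒞, ∃ (b : Fin n → ZMod 2) (V : Submodule (ZMod 2) (Fin n → ZMod 2)),
      C = coset b V ∧ Module.finrank (ZMod 2) V = n - d)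
    (hone : ∀ C ∈ 𝒞, ∀ x ∈ C, f x = 1)
    (hcover : ∀ x, f x = 1 → ∃ C ∈ 𝒞, x ∈ C)
    (hess : ∀ C ∈ 𝒞, ¬ C ⊆ {x | ∃ C' ∈ 𝒞, C' ≠ C ∧ x ∈ C'}) :
    𝒞.card ≤ (3 * n) ^ d * 2 ^ d := by
  classical
  have hind : ∀ C : {C // C ∈ 𝒞}, ∃ u ∈ Stmt18Aux.spanM n d,
      ∀ x, (u x = 1 ↔ x ∈ (C : Set (Fin n → ZMod 2))) := by
    rintro ⟨C, hC⟩
    obtain ⟨b, V, rfl, hV⟩ := hcoset C hC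
    exact Stmt18Aux.coset_indicator hd b V hV
  choose u hu hval using hind
  have hpriv : ∀ C : {C // C ∈ 𝒞}, ∃ x ∈ (C : Set (Fin n → ZMod 2)),
      ∀ C' ∈ 𝒞, C' ≠ (C : Set (Fin n → ZMod 2)) → x ∉ C' := by
    rintro ⟨C, hC⟩
    have h := hess C hC
    rw [Set.not_subset] at h
    obtain ⟨x, hxC, hx⟩ := h
    refine ⟨x, hxC, fun C' hC' hne hxC' => hx ⟨C', hC', hne, hxC'⟩⟩
  choose p hp1 hp2 using hpriv
  have hLI : LinearIndependent (ZMod 2) u := by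
    rw [linearIndependent_iff']
    intro s g hsum i hi
    have hev := congrFun hsum (p i)
    rw [Finset.sum_apply] at hev
    simp only [Pi.smul_apply, smul_eq_mul, Pi.zero_apply] at hev
    have hz : ∀ j ∈ s, j ≠ i → g j * u j (p i) = 0 := by
      intro j _ hji
      have hne : (j : Set (Fin n → ZMod 2)) ≠ (i : Set (Fin n → ZMod 2)) :=
        fun h => hji (Subtype.ext h)
      have hnot : u j (p i) ≠ 1 := fun h1 => hp2 i j.1 j.2 hne ((hval j (p i)).mp h1)
      rcases Stmt18Aux.zmod2_cases (u j (p i)) with h0 | h1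
      · rw [h0, mul_zero]
      · exact absurd h1 hnot
    rw [Finset.sum_eq_single i hz (fun hni => absurd hi hni)] at hev
    rwa [(hval i (p i)).mpr (hp1 i), mul_one] at hev
  let Mf : Finset ((Fin n → ZMod 2) → ZMod 2) :=
    (Finset.univ.filter (fun S : Finset (Fin n) => S.card ≤ d)).image Stmt18Aux.mon
  have hspan : Stmt18Aux.spanM n d = Submodule.span (ZMod 2) (Mf : Set _) := by
    unfold Stmt18Aux.spanM
    congr 1
    ext g
    simp [Mf, eq_comm]
  let W := Submodule.span (ZMod 2) (Mf : Set ((Fin n → ZMod 2) → ZMod 2))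
  have huW : ∀ C, u C ∈ W := fun C => (le_of_eq hspan) (hu C)
  have hLIW : LinearIndependent (ZMod 2) (fun C => (⟨u C, huW C⟩ : W)) :=
    LinearIndependent.of_comp W.subtype hLI
  haveI : Module.Finite (ZMod 2) W := Module.Finite.span_of_finite _ (Set.toFinite _)
  have hcard : Fintype.card {C // C ∈ 𝒞} ≤ finrank (ZMod 2) W :=
    hLIW.fintype_card_le_finrank
  have hrank : finrank (ZMod 2) W ≤ Mf.card := finrank_span_finset_le_card Mf
  have h1 : Mf.card ≤ (Finset.univ.filter (fun S : Finset (Fin n) => S.card ≤ d)).card :=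
    Finset.card_image_le
  have h2 : (Finset.univ.filter (fun S : Finset (Fin n) => S.card ≤ d)).card
      ≤ ∑ k ∈ Finset.range (d+1), n.choose k := by
    have hsub : Finset.univ.filter (fun S : Finset (Fin n) => S.card ≤ d)
        ⊆ (Finset.range (d+1)).biUnion (fun k => Finset.powersetCard k Finset.univ) := by
      intro S hS
      simp only [Finset.mem_filter, Finset.mem_univ, true_and] at hS
      simp only [Finset.mem_biUnion, Finset.mem_range, Finset.mem_powersetCard]
      exact ⟨S.card, by omega, Finset.subset_univ S, rfl⟩
    calc (Finset.univ.filter (fun S : Finset (Fin n) => S.card ≤ d)).card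
        ≤ _ := Finset.card_le_card hsub
      _ ≤ ∑ k ∈ Finset.range (d+1),
            (Finset.powersetCard k (Finset.univ : Finset (Fin n))).card :=
          Finset.card_biUnion_le
      _ = ∑ k ∈ Finset.range (d+1), n.choose k := by
          refine Finset.sum_congr rfl fun k _ => ?_
          rw [Finset.card_powersetCard, Finset.card_univ, Fintype.card_fin]
  have h3 : ∑ k ∈ Finset.range (d+1), n.choose k ≤ (3*n)^d * 2^d := by
    rcases Nat.eq_zero_or_pos d with rfl | hdpos
    · simp
    · have hn : 1 ≤ n := le_trans hdpos hd
      calc ∑ k ∈ Finset.range (d+1), n.choose k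
          ≤ ∑ _k ∈ Finset.range (d+1), n^d := by
            refine Finset.sum_le_sum fun k hk => ?_
            refine le_trans (Nat.choose_le_pow n k) (Nat.pow_le_pow_right hn ?_)
            simp only [Finset.mem_range] at hk; omega
        _ = (d+1) * n^d := by rw [Finset.sum_const, Finset.card_range, smul_eq_mul]
        _ ≤ 2^d * n^d := Nat.mul_le_mul_right _ (Nat.lt_two_pow_self (n := d))
        _ ≤ 2^d * (3*n)^d := Nat.mul_le_mul_left _ (Nat.pow_le_pow_left (by omega) d)
        _ = (3*n)^d * 2^d := Nat.mul_comm _ _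
  calc 𝒞.card = Fintype.card {C // C ∈ 𝒞} := (Fintype.card_coe 𝒞).symm
    _ ≤ finrank (ZMod 2) W := hcard
    _ ≤ Mf.card := hrank
    _ ≤ _ := le_trans h1 (le_trans h2 h3)
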